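/- Let μ be the measure with density π_used(β|D) and ν the measure with density proportional to π_used(β|D)·ω(β), where ω(β) = 0.5 + (1/(4T·φ(β)))·1_{[-T,T]}(β) and φ is a positive density. Then the ν-probability of the ROPE [-T,T] equals [0.5·μ([-T,T]) + (1/(4T))∫_{-T}^{T} π_used(β|D)/φ(β) dβ] divided by [0.5 + (1/(4T))∫_{-T}^{T} π_used(β|D)/φ(β) dβ], and in particular ν([-T,T]) ≥ μ([-T,T]). -/

import Mathlib

open Real MeasureTheory

/-- reweighting the used posterior density π by
ω(β) = 0.5 + (1/(4T·φ(β)))·1_{[-T,T]}(β) yields a ROPE probability equal to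
(0.5·μ(ROPE) + (1/(4T))∫_ROPE π/φ) / (0.5 + (1/(4T))∫_ROPE π/φ), which is at least
the unweighted ROPE probability μ(ROPE) = ∫_ROPE π. -/
theorem reweighted_rope_probability
    (σ T : ℝ) (hσ : 0 < σ) (hT : 0 < T)
    (φ πU ω : ℝ → ℝ)
    (hφ : ∀ β, φ β = (1 / (σ * Real.sqrt (2 * π))) * Real.exp (-β ^ 2 / (2 * σ ^ 2)))
    (hπ_nonneg : ∀ β, 0 ≤ πU β)
    (hπ_meas : Measurable πU)
    (hπ_int : Integrable πU)
    (hπ_prob : ∫ β, πU β = 1)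
    (hratio_int : IntegrableOn (fun β => πU β / φ β) (Set.Icc (-T) T))
    (hω : ∀ β, ω β = 0.5 + (1 / (4 * T)) * (1 / φ β) * Set.indicator (Set.Icc (-T) T) (fun _ => (1:ℝ)) β) :
    (∫ β in Set.Icc (-T) T, πU β * ω β) / (∫ β, πU β * ω β)
      = (0.5 * (∫ β in Set.Icc (-T) T, πU β)
           + (1 / (4 * T)) * ∫ β in Set.Icc (-T) T, πU β / φ β)
        / (0.5 + (1 / (4 * T)) * ∫ β in Set.Icc (-T) T, πU β / φ β) ∧
    (∫ β in Set.Icc (-T) T, πU β)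
      ≤ (∫ β in Set.Icc (-T) T, πU β * ω β) / (∫ β, πU β * ω β) := by

  have hπpos : 0 < (π : ℝ) := Real.pi_pos
  have hφpos : ∀ β, 0 < φ β := by
    intro β; rw [hφ]
    have h2π : 0 < Real.sqrt (2 * π) := Real.sqrt_pos.2 (by positivity)
    positivity
  set c := (1 / (4 * T)) with hc
  have hc0 : 0 < c := by positivity
  have hkey : ∀ β, πU β * ω β
      = 0.5 * πU β + c * Set.indicator (Set.Icc (-T) T) (fun b => πU b / φ b) β := by
    intro β
    rw [hω]
    by_cases h : β ∈ Set.Icc (-T) T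
    · rw [Set.indicator_of_mem h, Set.indicator_of_mem h]
      have := (hφpos β).ne'
      field_simp
    · rw [Set.indicator_of_notMem h, Set.indicator_of_notMem h]
      ring
  have hind_int : Integrable ((Set.Icc (-T) T).indicator (fun b => πU b / φ b)) :=
    hratio_int.integrable_indicator measurableSet_Icc
  have h1 : Integrable (fun β => 0.5 * πU β) := hπ_int.const_mul _
  have h2 : Integrable (fun β => c * (Set.Icc (-T) T).indicator (fun b => πU b / φ b) β) :=
    hind_int.const_mul c
  set R := ∫ β in Set.Icc (-T) T, πU β / φ β with hR
  have hR0 : 0 ≤ R :=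
    setIntegral_nonneg measurableSet_Icc fun β _ => div_nonneg (hπ_nonneg β) (hφpos β).le
  set I := ∫ β in Set.Icc (-T) T, πU β with hI
  have hI0 : 0 ≤ I := setIntegral_nonneg measurableSet_Icc fun β _ => hπ_nonneg β
  have hI1 : I ≤ 1 := by
    rw [← hπ_prob]
    exact setIntegral_le_integral hπ_int (ae_of_all _ hπ_nonneg)
  have htot : ∫ β, πU β * ω β = 0.5 + c * R := by
    simp_rw [hkey]
    rw [integral_add h1 h2, integral_const_mul, integral_const_mul,
      integral_indicator measurableSet_Icc, hπ_prob]
    norm_num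
    exact Or.inl rfl
  have hset : ∫ β in Set.Icc (-T) T, πU β * ω β = 0.5 * I + c * R := by
    simp_rw [hkey]
    rw [integral_add h1.integrableOn h2.integrableOn,
      integral_const_mul, integral_const_mul,
      setIntegral_indicator measurableSet_Icc, Set.inter_self]
  have hD : (0:ℝ) < 0.5 + c * R := by nlinarith [mul_nonneg hc0.le hR0]
  constructor
  · rw [htot, hset]
  · rw [htot, hset, le_div_iff₀ hD]
    nlinarith [mul_nonneg hc0.le hR0]
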